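/- Let S' = {s'_1, …, s'_m} be a multiset of nonpositive integers summing to κW' (so W' ≤ 0), and consider κ+1 agents with identical additive valuations over chores, where in each of two rounds the arriving chore set contains chores of values s'_1, …, s'_m together with one chore of value 2W', and the allocation must be repetitive. Then S' can be partitioned into κ subsets each summing to W' if and only if there exists a repetitive allocation whose cumulative allocation is EF1 for chores after both round 1 and round 2. -/

import Mathlib

open Finset

/-- Value of the chores of one round: the `j`-th chore is worth `s' j ≤ 0` for
`j < m`, and the last chore is worth `2W'`. -/
def wval' (m : ℕ) (s' : Fin m → ℤ) (W' : ℤ) (j : Fin (m + 1)) : ℝ :=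
  if h : j.val < m then (s' ⟨j.val, h⟩ : ℝ) else 2 * (W' : ℝ)


lemma wval'_castSucc (m : ℕ) (s' : Fin m → ℤ) (W' : ℤ) (j : Fin m) :
    wval' m s' W' j.castSucc = (s' j : ℝ) := by
  simp [wval']

lemma wval'_last (m : ℕ) (s' : Fin m → ℤ) (W' : ℤ) :
    wval' m s' W' (Fin.last m) = 2 * (W' : ℝ) := by
  simp [wval']

lemma val_decomp (κ m : ℕ) (s' : Fin m → ℤ) (W' : ℤ) (A : Fin (m+1) → Fin (κ+1)) (i : Fin (κ+1)) :
    ∑ o ∈ Finset.univ.filter (fun o => A o = i), wval' m s' W' o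
    = (∑ j : Fin m, if A j.castSucc = i then (s' j : ℝ) else 0)
      + (if A (Fin.last m) = i then 2*(W':ℝ) else 0) := by
  rw [Finset.sum_filter, Fin.sum_univ_castSucc, wval'_last]
  congr 1
  refine Finset.sum_congr rfl fun j _ => ?_
  rw [wval'_castSucc]

lemma wval'_nonpos (m : ℕ) (s' : Fin m → ℤ) (W' : ℤ) (hs' : ∀ j, s' j ≤ 0)
    (hW' : W' ≤ 0) (o : Fin (m+1)) : wval' m s' W' o ≤ 0 := by
  unfold wval'
  split
  · exact_mod_cast hs' _
  · have : (W' : ℝ) ≤ 0 := by exact_mod_cast hW'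
    linarith

lemma sum_le_elt {ι : Type*} [DecidableEq ι] {S : Finset ι} {f : ι → ℝ}
    (h : ∀ o, f o ≤ 0) {c : ι} (hc : c ∈ S) : ∑ o ∈ S, f o ≤ f c := by
  rw [← Finset.add_sum_erase _ f hc]
  have := Finset.sum_nonpos (fun o (_ : o ∈ S.erase c) => h o)
  linarith


lemma stmt16_forward (κ m : ℕ) (hκ : 0 < κ) (s' : Fin m → ℤ) (hs' : ∀ j, s' j ≤ 0)
    (W' : ℤ) (hsum : ∑ j : Fin m, s' j = κ * W')
    (P : Fin m → Fin κ)
    (hP : ∀ a : Fin κ, ∑ j ∈ Finset.univ.filter (fun j => P j = a), s' j = W') :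
    (∃ A : Fin (m + 1) → Fin (κ + 1),
      (∀ i j : Fin (κ + 1), Finset.univ.filter (fun o => A o = i) = ∅ ∨
        ∃ c ∈ Finset.univ.filter (fun o => A o = i),
          (∑ o ∈ Finset.univ.filter (fun o => A o = i), wval' m s' W' o) - wval' m s' W' c ≥
            ∑ o ∈ Finset.univ.filter (fun o => A o = j), wval' m s' W' o) ∧
      (∀ i j : Fin (κ + 1), Finset.univ.filter (fun o => A o = i) = ∅ ∨
        ∃ c ∈ Finset.univ.filter (fun o => A o = i),
          2 * (∑ o ∈ Finset.univ.filter (fun o => A o = i), wval' m s' W' o) - wval' m s' W' c ≥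
            2 * ∑ o ∈ Finset.univ.filter (fun o => A o = j), wval' m s' W' o)) := by
  have hW' : W' ≤ 0 := by
    have h1 : ∑ j : Fin m, s' j ≤ 0 := Finset.sum_nonpos (fun j _ => hs' j)
    nlinarith [hsum, Int.natCast_pos.mpr hκ]
  have hW'r : (W' : ℝ) ≤ 0 := by exact_mod_cast hW'
  set A : Fin (m+1) → Fin (κ+1) :=
    fun o => if h : o.val < m then (P ⟨o.1, h⟩).castSucc else Fin.last κ with hA
  have hAc : ∀ j : Fin m, A j.castSucc = (P j).castSucc := by
    intro j; simp [hA]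
  have hAl : A (Fin.last m) = Fin.last κ := by simp [hA]
  set v : Fin (κ+1) → ℝ := fun i => ∑ o ∈ Finset.univ.filter (fun o => A o = i),
    wval' m s' W' o with hv
  have hvlast : v (Fin.last κ) = 2 * (W' : ℝ) := by
    show (∑ o ∈ Finset.univ.filter (fun o => A o = Fin.last κ), wval' m s' W' o) = 2 * (W' : ℝ)
    rw [val_decomp]
    have h1 : ∀ j : Fin m, ¬ (A j.castSucc = Fin.last κ) := by
      intro j
      rw [hAc]
      exact (Fin.castSucc_lt_last _).ne
    simp [h1, hAl]
  have hvc : ∀ a : Fin κ, v a.castSucc = (W' : ℝ) := by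
    intro a
    show (∑ o ∈ Finset.univ.filter (fun o => A o = a.castSucc), wval' m s' W' o) = (W' : ℝ)
    rw [val_decomp]
    have h2 : ¬ (A (Fin.last m) = a.castSucc) := by
      rw [hAl]; exact (Fin.castSucc_lt_last a).ne'
    rw [if_neg h2, add_zero]
    have h3 : ∀ j : Fin m, (A j.castSucc = a.castSucc) = (P j = a) := by
      intro j; rw [hAc]; simp [Fin.castSucc_inj]
    simp_rw [h3]
    have := hP a
    rw [Finset.sum_filter] at this
    exact_mod_cast congrArg (Int.cast : ℤ → ℝ) this
  have hvle : ∀ i, v i ≤ (W' : ℝ) := by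
    intro i
    rcases Fin.eq_castSucc_or_eq_last i with ⟨a, rfl⟩ | rfl
    · rw [hvc]
    · rw [hvlast]; linarith
  have key : ∀ i : Fin (κ+1), Finset.univ.filter (fun o => A o = i) = ∅ ∨
      ∃ c ∈ Finset.univ.filter (fun o => A o = i),
        v i - wval' m s' W' c ≥ (W' : ℝ) ∧
        2 * v i - wval' m s' W' c ≥ 2 * (W' : ℝ) := by
    intro i
    rcases Fin.eq_castSucc_or_eq_last i with ⟨a, rfl⟩ | rfl
    · rcases Finset.eq_empty_or_nonempty (Finset.univ.filter (fun o => A o = a.castSucc)) with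
        he | ⟨c, hc⟩
      · exact Or.inl he
      · refine Or.inr ⟨c, hc, ?_, ?_⟩ <;>
        · have := wval'_nonpos m s' W' hs' hW' c
          rw [hvc]; linarith
    · refine Or.inr ⟨Fin.last m, ?_, ?_, ?_⟩
      · simp [hAl]
      · rw [hvlast, wval'_last]; linarith
      · rw [hvlast, wval'_last]; linarith
  refine ⟨A, fun i j => ?_, fun i j => ?_⟩ <;>
    rcases key i with he | ⟨c, hc, h1, h2⟩
  · exact Or.inl he
  · exact Or.inr ⟨c, hc, show v i - wval' m s' W' c ≥ v j by have := hvle j; linarith⟩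
  · exact Or.inl he
  · exact Or.inr ⟨c, hc, show 2 * v i - wval' m s' W' c ≥ 2 * v j by have := hvle j; linarith⟩

lemma stmt16_backward (κ m : ℕ) (hκ : 0 < κ) (s' : Fin m → ℤ) (hs' : ∀ j, s' j ≤ 0)
    (W' : ℤ) (hsum : ∑ j : Fin m, s' j = κ * W')
    (A : Fin (m + 1) → Fin (κ + 1))
    (h2 : ∀ i j : Fin (κ + 1), Finset.univ.filter (fun o => A o = i) = ∅ ∨
        ∃ c ∈ Finset.univ.filter (fun o => A o = i),
          2 * (∑ o ∈ Finset.univ.filter (fun o => A o = i), wval' m s' W' o) - wval' m s' W' c ≥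
            2 * ∑ o ∈ Finset.univ.filter (fun o => A o = j), wval' m s' W' o) :
    (∃ P : Fin m → Fin κ, ∀ a : Fin κ,
        ∑ j ∈ Finset.univ.filter (fun j => P j = a), s' j = W') := by
  have hW' : W' ≤ 0 := by
    have h1 : ∑ j : Fin m, s' j ≤ 0 := Finset.sum_nonpos (fun j _ => hs' j)
    nlinarith [hsum, Int.natCast_pos.mpr hκ]
  have hW'r : (W' : ℝ) ≤ 0 := by exact_mod_cast hW'
  have hwnp := wval'_nonpos m s' W' hs' hW'
  set v : Fin (κ+1) → ℝ := fun i => ∑ o ∈ Finset.univ.filter (fun o => A o = i),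
    wval' m s' W' o with hv
  set k := A (Fin.last m) with hk
  have hlmem : Fin.last m ∈ Finset.univ.filter (fun o => A o = k) := by simp [hk]
  -- each bundle value is nonpositive
  have hvnp : ∀ i, v i ≤ 0 := fun i => Finset.sum_nonpos (fun o _ => hwnp o)
  -- v k ≤ 2W'
  have hvk2 : v k ≤ 2 * (W' : ℝ) := by
    have := sum_le_elt hwnp hlmem
    rwa [wval'_last] at this
  -- every bundle value ≤ W'
  have hvle : ∀ j, v j ≤ (W' : ℝ) := by
    intro j
    rcases h2 k j with he | ⟨c, hc, hineq⟩
    · rw [he] at hlmem; simp at hlmem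
    · have hcv : v k ≤ wval' m s' W' c := sum_le_elt hwnp hc
      have : 2 * v j ≤ 2 * v k - wval' m s' W' c := hineq
      linarith
  -- total sum
  have htot : ∑ i : Fin (κ+1), v i = ((κ : ℝ) + 2) * (W' : ℝ) := by
    have := Finset.sum_fiberwise (Finset.univ : Finset (Fin (m+1))) A (wval' m s' W')
    rw [hv]
    rw [this, Fin.sum_univ_castSucc, wval'_last]
    have hcs : ∀ j : Fin m, wval' m s' W' j.castSucc = (s' j : ℝ) := wval'_castSucc m s' W'
    simp_rw [hcs]
    have : ∑ j : Fin m, (s' j : ℝ) = (κ : ℝ) * (W' : ℝ) := by exact_mod_cast congrArg (Int.cast : ℤ → ℝ) hsum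
    rw [this]; ring
  -- v k ≥ 2W'
  have hsplit : ∑ i : Fin (κ+1), v i = v k + ∑ i ∈ Finset.univ.erase k, v i := by
    rw [Finset.add_sum_erase _ _ (Finset.mem_univ k)]
  have hcard : (Finset.univ.erase k).card = κ := by
    rw [Finset.card_erase_of_mem (Finset.mem_univ k)]
    simp
  have herase_le : ∑ i ∈ Finset.univ.erase k, v i ≤ (κ : ℝ) * (W' : ℝ) := by
    calc ∑ i ∈ Finset.univ.erase k, v i ≤ ∑ _i ∈ Finset.univ.erase k, (W' : ℝ) :=
          Finset.sum_le_sum (fun i _ => hvle i)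
      _ = (κ : ℝ) * (W' : ℝ) := by rw [Finset.sum_const, hcard]; simp [mul_comm]
  have hvk : v k = 2 * (W' : ℝ) := by
    have : v k ≥ 2 * (W' : ℝ) := by
      rw [hsplit] at htot
      linarith
    linarith
  have herase_eq : ∑ i ∈ Finset.univ.erase k, v i = (κ : ℝ) * (W' : ℝ) := by
    rw [hsplit, hvk] at htot; linarith
  -- each other agent has value exactly W'
  have hvW : ∀ i, i ≠ k → v i = (W' : ℝ) := by
    intro i hi
    by_contra hne
    have hlt : v i < (W' : ℝ) := lt_of_le_of_ne (hvle i) hne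
    have : ∑ j ∈ Finset.univ.erase k, v j < ∑ _j ∈ Finset.univ.erase k, (W' : ℝ) :=
      Finset.sum_lt_sum (fun j _ => hvle j) ⟨i, Finset.mem_erase.mpr ⟨hi, Finset.mem_univ i⟩, hlt⟩
    rw [Finset.sum_const, hcard] at this
    simp [mul_comm] at this
    linarith [herase_eq]
  -- chores assigned to k (other than last) have value 0
  have hkzero : ∀ j : Fin m, A j.castSucc = k → s' j = 0 := by
    have hd : v k = (∑ j : Fin m, if A j.castSucc = k then (s' j : ℝ) else 0) + 2*(W':ℝ) := by
      rw [hv]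
      show (∑ o ∈ Finset.univ.filter (fun o => A o = k), wval' m s' W' o) = _
      rw [val_decomp, if_pos hk.symm]
    have hz : (∑ j : Fin m, if A j.castSucc = k then (s' j : ℝ) else 0) = 0 := by
      rw [hvk] at hd; linarith
    have := (Finset.sum_eq_zero_iff_of_nonpos (fun j _ => by
      split <;> simp [hs' j, Int.cast_nonpos])).mp hz
    intro j hj
    have := this j (Finset.mem_univ j)
    rw [if_pos hj] at this
    exact_mod_cast this
  -- the partition
  set e := finSuccEquiv' k with he
  set a₀ : Fin κ := ⟨0, hκ⟩ with ha₀
  set P : Fin m → Fin κ := fun j => (e (A j.castSucc)).getD a₀ with hP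
  refine ⟨P, fun a => ?_⟩
  -- target subset
  have hiff : ∀ j : Fin m, (A j.castSucc = k.succAbove a) ↔ (P j = a ∧ A j.castSucc ≠ k) := by
    intro j
    constructor
    · intro h
      constructor
      · rw [hP]; simp only [h, he, finSuccEquiv'_succAbove, Option.getD_some]
      · rw [h]; exact Fin.succAbove_ne k a
    · rintro ⟨hpa, hne⟩
      rcases ho : e (A j.castSucc) with _ | b
      · exfalso; apply hne
        have := congrArg e.symm ho
        rw [Equiv.symm_apply_apply, he, finSuccEquiv'_symm_none] at this
        exact this
      · have hb : b = a := by rw [hP] at hpa; simp only [ho, Option.getD_some] at hpa; exact hpa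
        have := congrArg e.symm ho
        rw [Equiv.symm_apply_apply, he, finSuccEquiv'_symm_some, hb] at this
        exact this
  -- sum over the A-class equals W' (integer)
  have hclass : ∑ j ∈ Finset.univ.filter (fun j => A j.castSucc = k.succAbove a), s' j = W' := by
    have hne : k.succAbove a ≠ k := Fin.succAbove_ne k a
    have hvr : v (k.succAbove a) = (W' : ℝ) := hvW _ hne
    have hd : v (k.succAbove a)
        = (∑ j : Fin m, if A j.castSucc = k.succAbove a then (s' j : ℝ) else 0) := by
      rw [hv]
      show (∑ o ∈ Finset.univ.filter (fun o => A o = k.succAbove a), wval' m s' W' o) = _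
      rw [val_decomp, if_neg (by rw [← hk]; exact hne.symm), add_zero]
    rw [hd] at hvr
    rw [← Finset.sum_filter] at hvr
    exact_mod_cast hvr
  rw [← hclass]
  symm
  apply Finset.sum_subset
  · intro j hj
    simp only [Finset.mem_filter, Finset.mem_univ, true_and] at hj ⊢
    exact ((hiff j).mp hj).1
  · intro j hj hj2
    simp only [Finset.mem_filter, Finset.mem_univ, true_and] at hj hj2
    by_cases hk' : A j.castSucc = k
    · exact hkzero j hk'
    · exact absurd ((hiff j).mpr ⟨hj, hk'⟩) hj2

/-- Identical valuations, κ+1 agents, the same m+1 chores arriving in each of two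
rounds, repetitive allocation: `S'` can be partitioned into κ subsets each summing
to `W'` iff there is a repetitive allocation whose cumulative allocation is EF1 for
chores after round 1 and after round 2. -/
theorem stmt16 (κ m : ℕ) (hκ : 0 < κ) (s' : Fin m → ℤ) (hs' : ∀ j, s' j ≤ 0)
    (W' : ℤ) (hsum : ∑ j : Fin m, s' j = κ * W') :
    (∃ P : Fin m → Fin κ, ∀ a : Fin κ,
        ∑ j ∈ Finset.univ.filter (fun j => P j = a), s' j = W') ↔
    (∃ A : Fin (m + 1) → Fin (κ + 1),
      -- EF1 for chores after round 1
      (∀ i j : Fin (κ + 1), Finset.univ.filter (fun o => A o = i) = ∅ ∨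
        ∃ c ∈ Finset.univ.filter (fun o => A o = i),
          (∑ o ∈ Finset.univ.filter (fun o => A o = i), wval' m s' W' o) - wval' m s' W' c ≥
            ∑ o ∈ Finset.univ.filter (fun o => A o = j), wval' m s' W' o) ∧
      -- EF1 for chores after round 2 (each chore appears twice; one copy removable)
      (∀ i j : Fin (κ + 1), Finset.univ.filter (fun o => A o = i) = ∅ ∨
        ∃ c ∈ Finset.univ.filter (fun o => A o = i),
          2 * (∑ o ∈ Finset.univ.filter (fun o => A o = i), wval' m s' W' o) - wval' m s' W' c ≥
            2 * ∑ o ∈ Finset.univ.filter (fun o => A o = j), wval' m s' W' o)) := by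
  constructor
  · rintro ⟨P, hP⟩
    exact stmt16_forward κ m hκ s' hs' W' hsum P hP
  · rintro ⟨A, _, h2⟩
    exact stmt16_backward κ m hκ s' hs' W' hsum A h2
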